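/- arXiv:1112.2373 — 11 statements merged into one kernel-verified Lean document; each statement's English description precedes it below -/
import Mathlib

section
/- Let X be a topological space such that for every countable A ⊆ B(X) (Borel real-valued functions with the pointwise topology), every f in the closure of A lies in the closure of A under partial limits of sequences. Then for every countable family 𝒰 of Borel subsets of X that is an ω-cover of X (X ∉ 𝒰, every finite subset of X is contained in some member of 𝒰), X belongs to LI(𝒰), the closure of 𝒰 under the liminf operator on sequences of sets. -/
def SetLiminf {X : Type*} (B : ℕ → Set X) : Set X := ⋃ m, ⋂ n, ⋂ _ : m ≤ n, B n

inductive LI {X : Type*} (𝒰 : Set (Set X)) : Set X → Prop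
  | base {U} : U ∈ 𝒰 → LI 𝒰 U
  | lim (B : ℕ → Set X) : (∀ n, LI 𝒰 (B n)) → LI 𝒰 (SetLiminf B)

open Classical in
/-- The partial limit of a sequence of partial functions: defined at `x` iff the values
`f n x` are eventually defined and convergent, with value the limit. -/
noncomputable def partialLim {X : Type*} (f : ℕ → X → Option ℝ) : X → Option ℝ := fun x =>
  if h : (∀ᶠ n in Filter.atTop, (f n x).isSome) ∧
      ∃ y : ℝ, Filter.Tendsto (fun n => (f n x).getD 0) Filter.atTop (nhds y)
  then some h.2.choose else none

/-- The closure of a family of partial functions under partial limits of sequences. -/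
inductive Partlims {X : Type*} (A : Set (X → Option ℝ)) : (X → Option ℝ) → Prop
  | base {f} : f ∈ A → Partlims A f
  | lim (f : ℕ → X → Option ℝ) : (∀ n, Partlims A (f n)) → Partlims A (partialLim f)

/-- A total function viewed as a partial function. -/
def toPartial {X : Type*} (f : X → ℝ) : X → Option ℝ := fun x => some (f x)

theorem stmt5 {X : Type*} [TopologicalSpace X] [MeasurableSpace X] [BorelSpace X]
    (h : ∀ A : Set (X → ℝ), A.Countable → (∀ g ∈ A, Measurable g) →
      ∀ f : X → ℝ, Measurable f → f ∈ closure A →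
        Partlims (toPartial '' A) (toPartial f)) :
    ∀ 𝒰 : Set (Set X), 𝒰.Countable → (∀ U ∈ 𝒰, MeasurableSet U) →
      (∀ U ∈ 𝒰, U ≠ Set.univ) → (∀ F : Set X, F.Finite → ∃ U ∈ 𝒰, F ⊆ U) →
      LI 𝒰 Set.univ := by
  intro 𝒰 hcount hmeas hne homega
  classical
  set A : Set (X → ℝ) := (fun U => Set.indicator U (fun _ => (1:ℝ))) '' 𝒰 with hA
  have hAc : A.Countable := hcount.image _
  have hAm : ∀ g ∈ A, Measurable g := by
    rintro g ⟨U, hU, rfl⟩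
    exact measurable_const.indicator (hmeas U hU)
  have h1 : (fun _ => (1:ℝ)) ∈ closure A := by
    rw [mem_closure_iff]
    intro O hO hmem
    rcases isOpen_pi_iff.mp hO _ hmem with ⟨I, u, hu, hsub⟩
    rcases homega (I : Set X) I.finite_toSet with ⟨U, hU, hIU⟩
    refine ⟨Set.indicator U (fun _ => 1), hsub ?_, ⟨U, hU, rfl⟩⟩
    intro x hx
    have hxU : x ∈ U := hIU hx
    simpa [Set.indicator_of_mem hxU] using (hu x hx).2
  have hp := h A hAc hAm (fun _ => 1) measurable_const h1
  have key : ∀ g, Partlims (toPartial '' A) g →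
      (∀ x, g x = none ∨ g x = some 0 ∨ g x = some 1) ∧
      ∃ B, LI 𝒰 B ∧ {x | g x = some 1} ⊆ B := by
    intro g hg
    induction hg with
    | base hf =>
      rename_i f
      obtain ⟨g0, ⟨U, hU, rfl⟩, rfl⟩ := hf
      constructor
      · intro x
        by_cases hx : x ∈ U
        · right; right; simp [toPartial, Set.indicator_of_mem hx]
        · right; left; simp [toPartial, Set.indicator_of_notMem hx]
      · refine ⟨U, LI.base hU, ?_⟩
        intro x hx
        by_cases hxU : x ∈ U
        · exact hxU
        · exfalso
          simp only [toPartial, Set.indicator_of_notMem hxU, Set.mem_setOf_eq,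
            Option.some.injEq] at hx
          norm_num at hx
    | lim f hf ih =>
      choose B hLI hsubB using fun n => (ih n).2
      have hvals : ∀ n x, (f n x).getD 0 = 0 ∨ (f n x).getD 0 = 1 := by
        intro n x
        rcases (ih n).1 x with h' | h' | h' <;> simp [h']
      constructor
      · intro x
        by_cases hcond : (∀ᶠ n in Filter.atTop, (f n x).isSome) ∧
            ∃ y : ℝ, Filter.Tendsto (fun n => (f n x).getD 0) Filter.atTop (nhds y)
        · have hval : partialLim f x = some hcond.2.choose := dif_pos hcond
          have htend := hcond.2.choose_spec
          have hcl : IsClosed ({0, 1} : Set ℝ) :=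
            ((Set.finite_singleton (1:ℝ)).insert 0).isClosed
          have hmemc : hcond.2.choose ∈ ({0, 1} : Set ℝ) := by
            refine hcl.mem_of_tendsto htend ?_
            exact Filter.Eventually.of_forall fun n => by
              rcases hvals n x with h' | h' <;> simp [h']
          rcases hmemc with h' | h'
          · right; left; rw [hval, h']
          · right; right; rw [hval]; simp only [Set.mem_singleton_iff] at h'; rw [h']
        · left; exact dif_neg hcond
      · refine ⟨SetLiminf B, LI.lim B hLI, ?_⟩
        intro x hx
        simp only [Set.mem_setOf_eq] at hx
        by_cases hcond : (∀ᶠ n in Filter.atTop, (f n x).isSome) ∧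
            ∃ y : ℝ, Filter.Tendsto (fun n => (f n x).getD 0) Filter.atTop (nhds y)
        · have hval : partialLim f x = some hcond.2.choose := dif_pos hcond
          rw [hval, Option.some.injEq] at hx
          have htend := hcond.2.choose_spec
          rw [hx] at htend
          have hgt : ∀ᶠ n in Filter.atTop, (f n x).getD 0 ∈ Set.Ioi (1/2 : ℝ) :=
            htend.eventually_mem (Ioi_mem_nhds (by norm_num))
          have hev : ∀ᶠ n in Filter.atTop, f n x = some 1 := by
            filter_upwards [hgt, hcond.1] with n hn hsome
            rcases (ih n).1 x with h' | h' | h'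
            · rw [h'] at hsome; simp at hsome
            · rw [h'] at hn; norm_num [Set.mem_Ioi] at hn
            · exact h'
          obtain ⟨m, hm⟩ := Filter.eventually_atTop.mp hev
          simp only [SetLiminf, Set.mem_iUnion, Set.mem_iInter]
          exact ⟨m, fun n hn => hsubB n (hm n hn)⟩
        · rw [partialLim] at hx
          rw [dif_neg hcond] at hx
          exact absurd hx (by simp)
  obtain ⟨-, B, hLI, hsubuniv⟩ := key _ hp
  have hBuniv : B = Set.univ :=
    Set.eq_univ_of_univ_subset fun x _ => hsubuniv (by simp [toPartial])
  rw [← hBuniv]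
  exact hLI
end

section
/- Let X be a topological space with the property that for every countable Borel ω-cover 𝒰 of X there exist U_1, U_2, … ∈ 𝒰 with X = liminf_n U_n. Then for every countable A ⊆ B(X), every f in the pointwise closure of A is the pointwise limit of a sequence of elements of A. -/
theorem stmt8 {X : Type*} [TopologicalSpace X] [MeasurableSpace X] [BorelSpace X]
    (h : ∀ 𝒰 : Set (Set X), 𝒰.Countable → (∀ U ∈ 𝒰, MeasurableSet U) →
      (∀ U ∈ 𝒰, U ≠ Set.univ) → (∀ F : Set X, F.Finite → ∃ U ∈ 𝒰, F ⊆ U) →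
      ∃ U : ℕ → Set X, (∀ n, U n ∈ 𝒰) ∧ SetLiminf U = Set.univ) :
    ∀ A : Set (X → ℝ), A.Countable → (∀ g ∈ A, Measurable g) →
      ∀ f : X → ℝ, Measurable f → f ∈ closure A →
        ∃ g : ℕ → X → ℝ, (∀ n, g n ∈ A) ∧
          ∀ x, Filter.Tendsto (fun n => g n x) Filter.atTop (nhds (f x)) := by
  intro A hAc hAmeas f hfm hfcl
  classical
  -- From f ∈ closure A: approximation on finite sets
  have close : ∀ (F : Set X), F.Finite → ∀ ε : ℝ, 0 < ε →
      ∃ g ∈ A, ∀ x ∈ F, |g x - f x| < ε := by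
    intro F hF ε hε
    set O : Set (X → ℝ) := ⋂ x ∈ F, (fun h : X → ℝ => h x) ⁻¹' Metric.ball (f x) ε with hO_def
    have hO : IsOpen O :=
      hF.isOpen_biInter fun x _ => (continuous_apply x).isOpen_preimage _ Metric.isOpen_ball
    have hfO : f ∈ O := by
      simp only [hO_def, Set.mem_iInter, Set.mem_preimage]
      intro x _
      exact Metric.mem_ball_self hε
    obtain ⟨g, hgO, hgA⟩ := mem_closure_iff.mp hfcl O hO hfO
    refine ⟨g, hgA, fun x hx => ?_⟩
    have := Set.mem_iInter₂.mp hgO x hx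
    simpa [Real.dist_eq] using this
  -- small helper for tendsto
  have tendsto_of : ∀ (u : ℕ → ℝ) (c : ℝ),
      (∀ ε : ℝ, 0 < ε → ∃ J, ∀ j ≥ J, |u j - c| < ε) →
      Filter.Tendsto u Filter.atTop (nhds c) := by
    intro u c hu
    rw [Metric.tendsto_atTop]
    intro ε hε
    obtain ⟨J, hJ⟩ := hu ε hε
    exact ⟨J, fun j hj => by rw [Real.dist_eq]; exact hJ j hj⟩
  by_cases hchain : ∃ R : ℕ → Set X, (∀ n, MeasurableSet (R n)) ∧ Antitone R ∧
      (∀ n, (R n).Nonempty) ∧ (⋂ n, R n) = ∅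
  · -- Chain exists.
    obtain ⟨R, hRm, hRanti, hRne, hRempty⟩ := hchain
    by_cases hunif : ∀ n : ℕ, ∃ g ∈ A, ∀ y, |g y - f y| < 1 / ((n : ℝ) + 1)
    · -- uniform approximation
      choose g hgA hgc using hunif
      refine ⟨g, hgA, fun y => tendsto_of _ _ ?_⟩
      intro ε hε
      obtain ⟨M, hM⟩ := exists_nat_one_div_lt hε
      refine ⟨M, fun j hj => lt_of_lt_of_le (lt_of_lt_of_le (hgc j y) ?_) hM.le⟩
      apply one_div_le_one_div_of_le
      · positivity
      · have : (M : ℝ) ≤ (j : ℝ) := by exact_mod_cast hj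
        linarith
    · push_neg at hunif
      obtain ⟨N, hN⟩ := hunif
      -- hN : ∀ g ∈ A, ∃ y, 1/(N+1) ≤ |g y - f y|
      set W : (X → ℝ) → ℕ → Set X :=
        fun g n => {y | |g y - f y| < 1 / ((n : ℝ) + 1)} with hW_def
      have hWmeas : ∀ g ∈ A, ∀ n, MeasurableSet (W g n) := by
        intro g hg n
        have hm : Measurable fun y => |g y - f y| := ((hAmeas g hg).sub hfm).abs
        exact hm measurableSet_Iio
      have hWmono : ∀ (g : X → ℝ) (n n' : ℕ), n' ≤ n → W g n ⊆ W g n' := by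
        intro g n n' hnn y hy
        have hy' : |g y - f y| < 1 / ((n : ℝ) + 1) := hy
        show |g y - f y| < 1 / ((n' : ℝ) + 1)
        refine lt_of_lt_of_le hy' ?_
        apply one_div_le_one_div_of_le
        · positivity
        · have : (n' : ℝ) ≤ (n : ℝ) := by exact_mod_cast hnn
          linarith
      set V : Set (Set X) :=
        (fun p : (X → ℝ) × ℕ => W p.1 p.2 \ R p.2) '' (A ×ˢ {n : ℕ | N ≤ n}) with hV_def
      have hVc : V.Countable := (hAc.prod (Set.to_countable {n : ℕ | N ≤ n})).image _
      have hVmeas : ∀ U ∈ V, MeasurableSet U := by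
        rintro U ⟨⟨g, n⟩, ⟨hgA, _⟩, rfl⟩
        exact (hWmeas g hgA n).diff (hRm n)
      have hVproper : ∀ U ∈ V, U ≠ Set.univ := by
        rintro U ⟨⟨g, n⟩, ⟨hgA, hn⟩, rfl⟩ hEq
        obtain ⟨y₀, hy₀⟩ := hN g hgA
        have hEq' : W g n \ R n = Set.univ := hEq
        have hy₀mem : y₀ ∈ W g n \ R n := by rw [hEq']; trivial
        have : y₀ ∈ W g N := hWmono g n N hn hy₀mem.1
        exact absurd hy₀ (not_le.mpr this)
      have hVomega : ∀ F : Set X, F.Finite → ∃ U ∈ V, F ⊆ U := by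
        intro F hF
        have hexn : ∀ y : X, ∃ n, y ∉ R n := by
          intro y
          by_contra h'
          push_neg at h'
          have : y ∈ ⋂ n, R n := Set.mem_iInter.mpr h'
          rw [hRempty] at this
          exact this
        set φ : X → ℕ := fun y => Nat.find (hexn y) with hφ_def
        set n₀ : ℕ := N ⊔ hF.toFinset.sup φ with hn₀_def
        have hn₀N : N ≤ n₀ := le_sup_left
        have hFout : ∀ y ∈ F, y ∉ R n₀ := by
          intro y hy hyR
          have h1 : φ y ≤ n₀ := le_trans (Finset.le_sup (hF.mem_toFinset.mpr hy)) le_sup_right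
          exact Nat.find_spec (hexn y) (hRanti h1 hyR)
        obtain ⟨g, hgA, hg⟩ := close F hF (1 / ((n₀ : ℝ) + 1)) (by positivity)
        refine ⟨W g n₀ \ R n₀, ⟨⟨g, n₀⟩, ⟨hgA, hn₀N⟩, rfl⟩, fun y hy => ⟨hg y hy, hFout y hy⟩⟩
      obtain ⟨U, hUV, hUlim⟩ := h V hVc hVmeas hVproper hVomega
      choose p hpmem hpeq using hUV
      set g : ℕ → X → ℝ := fun j => (p j).1 with hg_def
      set m : ℕ → ℕ := fun j => (p j).2 with hm_def
      have hgA : ∀ j, g j ∈ A := fun j => (hpmem j).1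
      have hliminf : ∀ y : X, ∃ J, ∀ j ≥ J, y ∈ U j := by
        intro y
        have : y ∈ SetLiminf U := hUlim ▸ Set.mem_univ y
        simp only [SetLiminf, Set.mem_iUnion, Set.mem_iInter] at this
        obtain ⟨J, hJ⟩ := this
        exact ⟨J, fun j hj => hJ j hj⟩
      have hgrow : ∀ M : ℕ, ∃ J, ∀ j ≥ J, M < m j := by
        intro M
        obtain ⟨z, hz⟩ := hRne M
        obtain ⟨J, hJ⟩ := hliminf z
        refine ⟨J, fun j hj => ?_⟩
        by_contra hle
        push_neg at hle
        have hzU : z ∈ U j := hJ j hj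
        rw [← hpeq j] at hzU
        exact hzU.2 (hRanti hle hz)
      refine ⟨g, hgA, fun y => tendsto_of _ _ ?_⟩
      intro ε hε
      obtain ⟨M, hM⟩ := exists_nat_one_div_lt hε
      obtain ⟨J₀, hJ₀⟩ := hliminf y
      obtain ⟨J₁, hJ₁⟩ := hgrow M
      refine ⟨max J₀ J₁, fun j hj => ?_⟩
      have hyU : y ∈ U j := hJ₀ j (le_trans (le_max_left _ _) hj)
      rw [← hpeq j] at hyU
      have h1 : |g j y - f y| < 1 / ((m j : ℝ) + 1) := hyU.1
      have h2 : M < m j := hJ₁ j (le_trans (le_max_right _ _) hj)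
      refine lt_of_lt_of_le (lt_of_lt_of_le h1 ?_) hM.le
      apply one_div_le_one_div_of_le
      · positivity
      · have : (M : ℝ) ≤ (m j : ℝ) := by exact_mod_cast h2.le
        linarith
  · -- No chain: the measurable-equivalence quotient is finite.
    set r : X → X → Prop := fun a b => ∀ B : Set X, MeasurableSet B → (a ∈ B ↔ b ∈ B)
      with hr_def
    have hconst : ∀ (g : X → ℝ), Measurable g → ∀ a b, r a b → g a = g b := by
      intro g hg a b hab
      by_contra hne
      have hB := hg (measurableSet_singleton (g a))
      have := (hab _ hB).mp (by simp : a ∈ g ⁻¹' {g a})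
      simp only [Set.mem_preimage, Set.mem_singleton_iff] at this
      exact hne this.symm
    have hTex : ∃ T : Finset X, ∀ y : X, ∃ t ∈ T, r y t := by
      by_contra hT
      push_neg at hT
      -- hT : ∀ T : Finset X, ∃ y, ∀ t ∈ T, ¬ r y t
      choose F hFp using hT
      set S : ℕ → Finset X := fun n => Nat.rec ∅ (fun _ Sn => Sn ∪ {F Sn}) n with hS_def
      set x : ℕ → X := fun n => F (S n) with hx_def
      have hSsucc : ∀ n, S (n + 1) = S n ∪ {F (S n)} := fun n => rfl
      have hSmono : ∀ i j, i ≤ j → S i ⊆ S j := by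
        intro i j hij
        induction j with
        | zero => simp_all
        | succ k ih =>
          rcases Nat.lt_or_ge i (k + 1) with hlt | hge
          · have := ih (Nat.lt_succ_iff.mp hlt)
            rw [hSsucc k]
            exact this.trans Finset.subset_union_left
          · have : i = k + 1 := le_antisymm hij hge
            subst this
            exact Finset.Subset.refl _
      have hxS : ∀ i j, i < j → x i ∈ S j := by
        intro i j hij
        have h1 : x i ∈ S (i + 1) := by
          rw [hSsucc i]
          exact Finset.mem_union_right _ (Finset.mem_singleton_self _)
        exact hSmono (i + 1) j hij h1
      have hnr : ∀ i j, i < j → ¬ r (x j) (x i) := by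
        intro i j hij
        exact hFp (S j) (x i) (hxS i j hij)
      have hrsymm : ∀ a b, ¬ r a b → ¬ r b a := by
        intro a b hab hba
        exact hab (fun B hB => (hba B hB).symm)
      have hnr' : ∀ i j, i ≠ j → ¬ r (x i) (x j) := by
        intro i j hij
        rcases lt_or_gt_of_ne hij with hlt | hgt
        · exact hrsymm _ _ (hnr i j hlt)
        · exact hnr j i hgt
      have key : ∀ i j : ℕ, ∃ B : Set X, MeasurableSet B ∧ x i ∈ B ∧ (i ≠ j → x j ∉ B) := by
        intro i j
        by_cases hij : i = j
        · exact ⟨Set.univ, MeasurableSet.univ, Set.mem_univ _, fun h' => absurd hij h'⟩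
        · have hex : ∃ B : Set X, MeasurableSet B ∧ ¬(x i ∈ B ↔ x j ∈ B) := by
            by_contra hc
            push_neg at hc
            exact (hnr' i j hij) (fun B hB => hc B hB)
          obtain ⟨B, hBm, hBiff⟩ := hex
          by_cases hxi : x i ∈ B
          · refine ⟨B, hBm, hxi, fun _ hxj => hBiff ⟨fun _ => hxj, fun _ => hxi⟩⟩
          · have hxj : x j ∈ B := by
              by_contra hxj
              exact hBiff ⟨fun h' => absurd h' hxi, fun h' => absurd h' hxj⟩
            exact ⟨Bᶜ, hBm.compl, hxi, fun _ hc => hc hxj⟩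
      choose Bf hBm hBmem hBnot using key
      set C : ℕ → Set X := fun i => ⋂ j, Bf i j with hC_def
      have hCmeas : ∀ i, MeasurableSet (C i) := fun i => MeasurableSet.iInter (fun j => hBm i j)
      have hCx : ∀ i, x i ∈ C i := fun i => Set.mem_iInter.mpr (fun j => hBmem i j)
      have hCnot : ∀ i k, k ≠ i → x i ∉ C k := by
        intro i k hki hin
        exact hBnot k i hki (Set.mem_iInter.mp hin i)
      set D : ℕ → Set X := fun i => C i \ ⋃ k, ⋃ _ : k < i, C k with hD_def
      have hDmeas : ∀ i, MeasurableSet (D i) :=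
        fun i => (hCmeas i).diff (MeasurableSet.iUnion fun k => MeasurableSet.iUnion
          fun _ => hCmeas k)
      have hxD : ∀ i, x i ∈ D i := by
        intro i
        refine ⟨hCx i, ?_⟩
        simp only [Set.mem_iUnion, not_exists]
        intro k hk
        exact hCnot i k (Nat.ne_of_lt hk)
      set R : ℕ → Set X := fun n => ⋃ i, ⋃ _ : n ≤ i, D i with hR_def
      have hRmeas : ∀ n, MeasurableSet (R n) :=
        fun n => MeasurableSet.iUnion fun i => MeasurableSet.iUnion fun _ => hDmeas i
      have hRanti : Antitone R := by
        intro a b hab y hy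
        simp only [hR_def, Set.mem_iUnion] at hy ⊢
        obtain ⟨i, hbi, hyD⟩ := hy
        exact ⟨i, le_trans hab hbi, hyD⟩
      have hRne : ∀ n, (R n).Nonempty := by
        intro n
        refine ⟨x n, ?_⟩
        simp only [hR_def, Set.mem_iUnion]
        exact ⟨n, le_refl n, hxD n⟩
      have hRempty : (⋂ n, R n) = ∅ := by
        rw [Set.eq_empty_iff_forall_notMem]
        intro y hy
        have hy0 : y ∈ R 0 := Set.mem_iInter.mp hy 0
        simp only [hR_def, Set.mem_iUnion] at hy0
        obtain ⟨i₀, _, hyD₀⟩ := hy0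
        have hy1 : y ∈ R (i₀ + 1) := Set.mem_iInter.mp hy (i₀ + 1)
        simp only [hR_def, Set.mem_iUnion] at hy1
        obtain ⟨i₁, hle, hyD₁⟩ := hy1
        have : y ∉ ⋃ k, ⋃ _ : k < i₁, C k := hyD₁.2
        simp only [Set.mem_iUnion, not_exists] at this
        exact this i₀ hle hyD₀.1
      exact hchain ⟨R, hRmeas, hRanti, hRne, hRempty⟩
    obtain ⟨T, hT⟩ := hTex
    have hTfin : (↑T : Set X).Finite := T.finite_toSet
    have happ : ∀ k : ℕ, ∃ g ∈ A, ∀ t ∈ (↑T : Set X), |g t - f t| < 1 / ((k : ℝ) + 1) :=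
      fun k => close _ hTfin _ (by positivity)
    choose g hgA hgc using happ
    refine ⟨g, hgA, fun y => ?_⟩
    obtain ⟨t, htT, hrt⟩ := hT y
    have hfx : f y = f t := hconst f hfm y t hrt
    have hgx : ∀ k, g k y = g k t := fun k => hconst (g k) (hAmeas _ (hgA k)) y t hrt
    have heq : (fun k => g k y) = fun k => g k t := funext hgx
    rw [heq, hfx]
    refine tendsto_of _ _ ?_
    intro ε hε
    obtain ⟨M, hM⟩ := exists_nat_one_div_lt hε
    refine ⟨M, fun j hj => ?_⟩
    refine lt_of_lt_of_le (lt_of_lt_of_le (hgc j t htT) ?_) hM.le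
    apply one_div_le_one_div_of_le
    · positivity
    · have : (M : ℝ) ≤ (j : ℝ) := by exact_mod_cast hj
      linarith
end

section
/- If X is an uncountable topological space in which every singleton is a Borel set, then the space B(X) of Borel real-valued functions on X, with the topology of pointwise convergence, is not countably tight: there is a set A ⊆ B(X) and a point in the closure of A that is not in the closure of any countable subset of A. -/
theorem stmt9 {X : Type*} [TopologicalSpace X] [MeasurableSpace X] [BorelSpace X]
    (hX : ¬ (Set.univ : Set X).Countable)
    (hsing : ∀ x : X, MeasurableSet ({x} : Set X)) :
    ∃ A : Set (X → ℝ), (∀ g ∈ A, Measurable g) ∧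
      ∃ f : X → ℝ, Measurable f ∧ f ∈ closure A ∧
        ∀ D ⊆ A, D.Countable → f ∉ closure D := by
  classical
  set A : Set (X → ℝ) := {g | ∃ s : Finset X, g = (s : Set X).indicator 1} with hA
  have hmeasA : ∀ g ∈ A, Measurable g := by
    rintro g ⟨s, rfl⟩
    refine Measurable.indicator measurable_one ?_
    have : (s : Set X) = ⋃ x ∈ s, {x} := by ext y; simp
    rw [this]
    exact MeasurableSet.biUnion s.countable_toSet (fun x _ => hsing x)
  refine ⟨A, hmeasA, (1 : X → ℝ), measurable_one, ?_, ?_⟩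
  · -- 1 is the limit of indicators of finite sets
    have htend : Filter.Tendsto (fun s : Finset X => (s : Set X).indicator (1 : X → ℝ))
        Filter.atTop (nhds 1) := by
      rw [tendsto_pi_nhds]
      intro x
      apply Filter.Tendsto.congr' (f₁ := fun _ => (1 : ℝ))
      · filter_upwards [Filter.eventually_ge_atTop ({x} : Finset X)] with s hs
        have hx : x ∈ (s : Set X) := hs (Finset.mem_singleton_self x)
        simp [Set.indicator_of_mem hx]
      · exact tendsto_const_nhds
    exact mem_closure_of_tendsto htend (Filter.Eventually.of_forall fun s => ⟨s, rfl⟩)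
  · intro D hDA hDc hcl
    -- union of supports of elements of D is countable
    have hT : (⋃ g ∈ D, {x | g x ≠ 0}).Countable := by
      refine Set.Countable.biUnion hDc fun g hg => ?_
      obtain ⟨s, rfl⟩ := hDA hg
      refine (s.countable_toSet).mono fun x hx => ?_
      by_contra hxs
      exact hx (Set.indicator_of_notMem hxs 1)
    obtain ⟨x, -, hx⟩ : ∃ x ∈ (Set.univ : Set X), x ∉ ⋃ g ∈ D, {x | g x ≠ 0} := by
      by_contra h
      push_neg at h
      exact hX (hT.mono fun x _ => by simpa using h x (Set.mem_univ x))
    have hclosed : IsClosed {h : X → ℝ | h x = 0} :=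
      isClosed_eq (continuous_apply x) continuous_const
    have hsub : D ⊆ {h : X → ℝ | h x = 0} := by
      intro g hg
      by_contra hne
      exact hx (Set.mem_biUnion hg hne)
    have := (hclosed.closure_subset_iff.mpr hsub) hcl
    simp at this
end

section
/- Let X be a topological space such that for every A ⊆ C(X,ℝ), every f in the pointwise closure of A belongs to partlims(A). Then C(X,ℝ) with the pointwise topology is countably tight. -/
lemma Partlims_mono {X : Type*} {B C : Set (X → Option ℝ)} (hBC : B ⊆ C) {g}
    (hg : Partlims B g) : Partlims C g := by
  induction hg with
  | base hf => exact .base (hBC hf)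
  | lim f _ ih => exact .lim f ih

lemma Partlims_countable {X : Type*} {B : Set (X → Option ℝ)} {g}
    (hg : Partlims B g) : ∃ D ⊆ B, D.Countable ∧ Partlims D g := by
  induction hg with
  | @base f hf =>
      exact ⟨{f}, Set.singleton_subset_iff.2 hf, Set.countable_singleton f, .base rfl⟩
  | lim f _ ih =>
      choose D hDB hDc hD using ih
      refine ⟨⋃ n, D n, Set.iUnion_subset hDB, Set.countable_iUnion hDc, .lim f ?_⟩
      exact fun n => Partlims_mono (Set.subset_iUnion D n) (hD n)

lemma Partlims_approx {X : Type*} {B : Set (X → Option ℝ)} {g}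
    (hg : Partlims B g) (s : Finset X) (hs : ∀ x ∈ s, (g x).isSome)
    {ε : ℝ} (hε : 0 < ε) :
    ∃ b ∈ B, ∀ x ∈ s, (b x).isSome ∧ |(b x).getD 0 - (g x).getD 0| < ε := by
  induction hg generalizing s ε with
  | @base f hf =>
      exact ⟨f, hf, fun x hx => ⟨hs x hx, by simpa using hε⟩⟩
  | lim f _ ih =>
      -- for each x in s the defining condition holds
      have hc : ∀ x ∈ s, (∀ᶠ n in Filter.atTop, (f n x).isSome) ∧
          ∃ y : ℝ, Filter.Tendsto (fun n => (f n x).getD 0) Filter.atTop (nhds y) := by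
        intro x hx
        have := hs x hx
        rw [partialLim] at this
        by_contra hcon
        rw [dif_neg hcon] at this
        simp at this
      have hval : ∀ x ∈ s, Filter.Tendsto (fun n => (f n x).getD 0) Filter.atTop
          (nhds ((partialLim f x).getD 0)) := by
        intro x hx
        have hcx := hc x hx
        have : partialLim f x = some hcx.2.choose := by
          rw [partialLim, dif_pos hcx]
        rw [this]
        exact hcx.2.choose_spec
      -- eventually all values defined and close
      have hev : ∀ᶠ n in Filter.atTop, ∀ x ∈ s, (f n x).isSome ∧
          |(f n x).getD 0 - (partialLim f x).getD 0| < ε / 2 := by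
        rw [Filter.eventually_all_finset]
        intro x hx
        have h1 := (hc x hx).1
        have h2 := (hval x hx).eventually (Metric.ball_mem_nhds _ (half_pos hε))
        filter_upwards [h1, h2] with n hn1 hn2
        exact ⟨hn1, by simpa [Real.dist_eq] using hn2⟩
      obtain ⟨n, hn⟩ := hev.exists
      obtain ⟨b, hbB, hb⟩ := ih n s (fun x hx => (hn x hx).1) (half_pos hε)
      refine ⟨b, hbB, fun x hx => ⟨(hb x hx).1, ?_⟩⟩
      calc |(b x).getD 0 - (partialLim f x).getD 0|
          ≤ |(b x).getD 0 - (f n x).getD 0| + |(f n x).getD 0 - (partialLim f x).getD 0| :=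
            abs_sub_le _ _ _
        _ < ε / 2 + ε / 2 := add_lt_add (hb x hx).2 (hn x hx).2
        _ = ε := add_halves ε

lemma toPartial_injective {X : Type*} : Function.Injective (toPartial (X := X)) := by
  intro a b hab
  funext x
  have := congrFun hab x
  simpa [toPartial] using this

theorem stmt10 {X : Type*} [TopologicalSpace X]
    (h : ∀ A : Set (X → ℝ), (∀ g ∈ A, Continuous g) →
      ∀ f : X → ℝ, Continuous f → f ∈ closure A →
        Partlims (toPartial '' A) (toPartial f)) :
    ∀ A : Set (X → ℝ), (∀ g ∈ A, Continuous g) →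
      ∀ f : X → ℝ, Continuous f → f ∈ closure A →
        ∃ D ⊆ A, D.Countable ∧ f ∈ closure D := by
  intro A hA f hf hfA
  obtain ⟨D', hD'A, hD'c, hD'⟩ := Partlims_countable (h A hA f hf hfA)
  set D : Set (X → ℝ) := {a ∈ A | toPartial a ∈ D'} with hD
  have hDA : D ⊆ A := fun a ha => ha.1
  have hDc : D.Countable :=
    ((hD'c.preimage toPartial_injective).mono (fun a ha => ha.2))
  have hsub : D' ⊆ toPartial '' D := by
    intro b hb
    obtain ⟨a, haA, rfl⟩ := hD'A hb
    exact ⟨a, ⟨haA, hb⟩, rfl⟩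
  have hPD : Partlims (toPartial '' D) (toPartial f) := Partlims_mono hsub hD'
  refine ⟨D, hDA, hDc, ?_⟩
  rw [mem_closure_iff_nhds]
  intro t ht
  rw [nhds_pi, Filter.mem_pi] at ht
  obtain ⟨I, hIfin, V, hV, hVt⟩ := ht
  have hball : ∀ x, x ∈ I → ∃ ε > 0, Metric.ball (f x) ε ⊆ V x := by
    intro x hx
    exact Metric.mem_nhds_iff.1 (hV x)
  choose! ε hεpos hεball using hball
  set s := hIfin.toFinset with hs
  set δ : ℝ := if hne : s.Nonempty then (s.inf' hne ε) ⊓ 1 else 1 with hδ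
  have hδpos : 0 < δ := by
    rw [hδ]
    split_ifs with hne
    · refine lt_min ?_ one_pos
      obtain ⟨x, hx, hxe⟩ := Finset.exists_mem_eq_inf' hne ε
      rw [hxe]
      exact hεpos x (hIfin.mem_toFinset.1 hx)
    · exact one_pos
  obtain ⟨b, hbD, hb⟩ := Partlims_approx hPD s (fun x _ => rfl) hδpos
  obtain ⟨a, haD, rfl⟩ := hbD
  refine ⟨a, ?_, haD⟩
  apply hVt
  intro x hx
  apply hεball x hx
  have hxs : x ∈ s := hIfin.mem_toFinset.2 hx
  have := (hb x hxs).2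
  simp only [toPartial, Option.getD_some] at this
  have hδle : δ ≤ ε x := by
    rw [hδ, dif_pos ⟨x, hxs⟩]
    exact le_trans inf_le_left (Finset.inf'_le ε hxs)
  rw [Metric.mem_ball, Real.dist_eq]
  exact lt_of_lt_of_le this hδle
end

section
/- For arbitrary topological spaces X, the property ⟨Ω→Γ⟩ (every open ω-cover of X contains a countable subfamily that is a γ-cover) is equivalent to S₁(Ω,Γ): for every sequence of open ω-covers 𝒰_1, 𝒰_2, … of X one can choose U_n ∈ 𝒰_n such that {U_n : n ∈ ℕ} is a γ-cover of X. -/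
/-- An ω-cover: a family of proper subsets such that every finite set is contained
in some member (in particular it is a cover). -/
def IsOmegaCover {X : Type*} (𝒰 : Set (Set X)) : Prop :=
  (∀ U ∈ 𝒰, U ≠ Set.univ) ∧ ∀ F : Set X, F.Finite → ∃ U ∈ 𝒰, F ⊆ U

lemma mem_setLiminf {X : Type*} {B : ℕ → Set X} {x : X} :
    x ∈ SetLiminf B ↔ ∃ m, ∀ n, m ≤ n → x ∈ B n := by
  simp [SetLiminf, Set.mem_iUnion, Set.mem_iInter]

theorem stmt12 {X : Type*} [TopologicalSpace X] :
    (∀ 𝒰 : Set (Set X), (∀ U ∈ 𝒰, IsOpen U) → IsOmegaCover 𝒰 →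
      ∃ U : ℕ → Set X, (∀ n, U n ∈ 𝒰) ∧ SetLiminf U = Set.univ) ↔
    (∀ 𝒰 : ℕ → Set (Set X),
      (∀ n, (∀ U ∈ 𝒰 n, IsOpen U) ∧ IsOmegaCover (𝒰 n)) →
      ∃ U : ℕ → Set X, (∀ n, U n ∈ 𝒰 n) ∧ SetLiminf U = Set.univ) := by
  constructor
  · intro h 𝒰 h𝒰
    -- Step 1: get a γ-cover (W j) from the ω-cover 𝒰 0.
    obtain ⟨W, hWmem, hWlim⟩ := h (𝒰 0) (h𝒰 0).1 (h𝒰 0).2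
    have hWproper : ∀ j, W j ≠ Set.univ := fun j => (h𝒰 0).2.1 (W j) (hWmem j)
    -- Step 2: the combined ω-cover 𝒞.
    set 𝒞 : Set (Set X) :=
      { S | ∃ (a : ℕ) (V : ℕ → Set X), (∀ i, V i ∈ 𝒰 i) ∧
          S = W a ∩ ⋂ i, ⋂ _ : i < a, V i } with h𝒞
    have h𝒞open : ∀ S ∈ 𝒞, IsOpen S := by
      rintro S ⟨a, V, hV, rfl⟩
      refine IsOpen.inter ((h𝒰 0).1 (W a) (hWmem a)) ?_
      exact (Set.finite_Iio a).isOpen_biInter (fun i _ => (h𝒰 i).1 (V i) (hV i))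
    have h𝒞omega : IsOmegaCover 𝒞 := by
      constructor
      · rintro S ⟨a, V, hV, rfl⟩ hSuniv
        exact hWproper a (Set.eq_univ_of_univ_subset (hSuniv ▸ Set.inter_subset_left))
      · intro F hF
        have hmem : ∀ x : X, ∃ m, ∀ n, m ≤ n → x ∈ W n := fun x =>
          mem_setLiminf.mp (hWlim.symm ▸ Set.mem_univ x)
        choose m hm using hmem
        set J := hF.toFinset.sup m with hJ
        choose G hG1 hG2 using fun i => (h𝒰 i).2.2 F hF
        refine ⟨W J ∩ ⋂ i, ⋂ _ : i < J, G i, ⟨J, G, hG1, rfl⟩, ?_⟩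
        intro x hxF
        refine ⟨hm x J (Finset.le_sup (hF.mem_toFinset.mpr hxF)), ?_⟩
        simp only [Set.mem_iInter]
        intro i _
        exact hG2 i hxF
    -- Step 3: apply the hypothesis to 𝒞.
    obtain ⟨C, hCmem, hClim⟩ := h 𝒞 h𝒞open h𝒞omega
    choose a V hVmem hCeq using hCmem
    -- Step 4: each value of a occurs finitely often.
    have hfin : ∀ b : ℕ, {t | a t = b}.Finite := by
      intro b
      by_contra hinf
      have hinf' : {t | a t = b}.Infinite := hinf
      apply hWproper b
      apply Set.eq_univ_of_forall
      intro x
      obtain ⟨T, hT⟩ := mem_setLiminf.mp (hClim.symm ▸ Set.mem_univ x)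
      obtain ⟨t, ht⟩ := (hinf'.diff (Set.finite_Iic T)).nonempty
      have hxC : x ∈ C t := hT t (le_of_not_ge ht.2)
      rw [hCeq t] at hxC
      rw [← ht.1]
      exact hxC.1
    -- Step 5: for each n there are arbitrarily large t with n < a t.
    have hsel : ∀ n k : ℕ, ∃ t, k < t ∧ n < a t := by
      intro n k
      have hfin2 : {t | ¬ n < a t}.Finite := by
        refine Set.Finite.subset
          (Set.Finite.biUnion (Finset.range (n + 1)).finite_toSet (fun b _ => hfin b)) ?_
        intro t ht
        simp only [Set.mem_setOf_eq, not_lt] at ht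
        exact Set.mem_biUnion (by simp [Nat.lt_succ_iff, ht]) rfl
      have hinf2 : {t | n < a t}.Infinite := by
        have : {t | n < a t} = {t | ¬ n < a t}ᶜ := by ext t; simp
        rw [this]
        exact hfin2.infinite_compl
      obtain ⟨t, ht⟩ := (hinf2.diff (Set.finite_Iic k)).nonempty
      exact ⟨t, lt_of_not_ge ht.2, ht.1⟩
    choose g hg1 hg2 using hsel
    -- the increasing selection of indices
    let t : ℕ → ℕ := fun n => Nat.rec (g 0 0) (fun m tm => g (m + 1) tm) n
    have ht_lt : ∀ n, n < a (t n) := by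
      intro n
      cases n with
      | zero => exact hg2 0 0
      | succ m => exact hg2 (m + 1) (t m)
    have ht_ge : ∀ n, n ≤ t n := by
      intro n
      induction n with
      | zero => exact Nat.zero_le _
      | succ m ih =>
        have : t m < t (m + 1) := hg1 (m + 1) (t m)
        omega
    refine ⟨fun n => V (t n) n, fun n => hVmem (t n) n, ?_⟩
    apply Set.eq_univ_of_forall
    intro x
    obtain ⟨T, hT⟩ := mem_setLiminf.mp (hClim.symm ▸ Set.mem_univ x)
    rw [mem_setLiminf]
    refine ⟨T, fun n hn => ?_⟩
    have hxC : x ∈ C (t n) := hT (t n) (le_trans hn (ht_ge n))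
    rw [hCeq (t n)] at hxC
    have := hxC.2
    simp only [Set.mem_iInter] at this
    exact this n (ht_lt n)
  · intro h 𝒰 hopen homega
    obtain ⟨U, hU1, hU2⟩ := h (fun _ => 𝒰) (fun _ => ⟨hopen, homega⟩)
    exact ⟨U, hU1, hU2⟩
end

section
/- Let X be a topological space satisfying the property ⟨Ω→L⟩ for open covers: for every open ω-cover 𝒰 of X, X ∈ LI(𝒰). Then every finite power X^k also satisfies ⟨Ω→L⟩. -/
lemma box_lemma {k : ℕ} {X : Type*} [TopologicalSpace X] {U : Set (Fin k → X)}
    (hU : IsOpen U) {f : Fin k → X} (hf : f ∈ U) :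
    ∃ W : Fin k → Set X, (∀ i, IsOpen (W i)) ∧ (∀ i, f i ∈ W i) ∧
      {g : Fin k → X | ∀ i, g i ∈ W i} ⊆ U := by
  obtain ⟨I, u, hu, hsub⟩ := isOpen_pi_iff.mp hU f hf
  refine ⟨fun i => if i ∈ I then u i else Set.univ, ?_, ?_, ?_⟩
  · intro i; by_cases hi : i ∈ I
    · simpa [hi] using (hu i hi).1
    · simp [hi]
  · intro i; by_cases hi : i ∈ I
    · simpa [hi] using (hu i hi).2
    · simp [hi]
  · intro g hg
    apply hsub
    intro i hi
    have := hg i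
    simp only [Set.mem_setOf_eq] at this
    simpa [Finset.mem_coe.mp hi] using this

theorem stmt13 {X : Type*} [TopologicalSpace X]
    (h : ∀ 𝒰 : Set (Set X), (∀ U ∈ 𝒰, IsOpen U) → IsOmegaCover 𝒰 →
      LI 𝒰 Set.univ) (k : ℕ) :
    ∀ 𝒰 : Set (Set (Fin k → X)), (∀ U ∈ 𝒰, IsOpen U) → IsOmegaCover 𝒰 →
      LI 𝒰 Set.univ := by
  intro 𝒰 hopen hcov
  classical
  set 𝒱 : Set (Set X) :=
    {V | IsOpen V ∧ V ≠ Set.univ ∧ ∃ U ∈ 𝒰, {g : Fin k → X | ∀ i, g i ∈ V} ⊆ U} with h𝒱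
  have hVopen : ∀ V ∈ 𝒱, IsOpen V := fun V hV => hV.1
  have hVcov : IsOmegaCover 𝒱 := by
    constructor
    · exact fun V hV => hV.2.1
    · intro F hF
      have hF' : (Set.univ.pi (fun _ : Fin k => F)).Finite := Set.Finite.pi (fun _ => hF)
      obtain ⟨U, hU𝒰, hFU⟩ := hcov.2 _ hF'
      have hUopen := hopen U hU𝒰
      choose W hWopen hWmem hWsub using
        fun (f : Fin k → X) (hf : f ∈ U) => box_lemma hUopen hf
      haveI := hF'.to_subtype
      have memF' : ∀ f : Fin k → X, (∀ i, f i ∈ F) → f ∈ Set.univ.pi (fun _ : Fin k => F) := by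
        intro f hf; simpa [Set.mem_pi] using fun i => hf i
      set V : Set X := ⋃ x ∈ F,
        ⋂ (f : (Set.univ.pi (fun _ : Fin k => F) : Set (Fin k → X))) (i : Fin k)
          (_ : (f : Fin k → X) i = x), W f (hFU f.2) i with hV
      have hsubU : {g : Fin k → X | ∀ i, g i ∈ V} ⊆ U := by
        intro g hg
        simp only [Set.mem_setOf_eq, hV, Set.mem_iUnion, Set.mem_iInter] at hg
        choose x hxF hx using hg
        have hxU : x ∈ Set.univ.pi (fun _ : Fin k => F) := memF' x hxF
        exact hWsub x (hFU hxU) (fun i => by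
          simpa using hx i ⟨x, hxU⟩ i rfl)
      refine ⟨V, ⟨?_, ?_, U, hU𝒰, hsubU⟩, ?_⟩
      · apply isOpen_biUnion
        intro x _
        exact isOpen_iInter_of_finite fun f =>
          isOpen_iInter_of_finite fun i => isOpen_iInter_of_finite fun _ =>
            hWopen _ _ i
      · intro hVuniv
        apply hcov.1 U hU𝒰
        apply Set.eq_univ_of_univ_subset
        intro g _
        exact hsubU (by simp [hVuniv])
      · intro x hxF
        simp only [hV, Set.mem_iUnion, Set.mem_iInter]
        refine ⟨x, hxF, fun f i hfi => ?_⟩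
        rw [← hfi]
        exact hWmem _ _ i
  have key : ∀ A : Set X, LI 𝒱 A →
      ∃ B, LI 𝒰 B ∧ {g : Fin k → X | ∀ i, g i ∈ A} ⊆ B := by
    intro A hA
    induction hA with
    | base hU =>
      rename_i V
      obtain ⟨_, _, U, hU𝒰, hsub⟩ := hU
      exact ⟨U, LI.base hU𝒰, hsub⟩
    | lim B hB ih =>
      choose C hC hsub using ih
      refine ⟨SetLiminf C, LI.lim C hC, ?_⟩
      intro g hg
      simp only [Set.mem_setOf_eq, SetLiminf, Set.mem_iUnion, Set.mem_iInter] at hg ⊢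
      choose m hm using hg
      refine ⟨Finset.univ.sup m, fun n hn => ?_⟩
      exact hsub n (fun i => hm i n (le_trans (Finset.le_sup (Finset.mem_univ i)) hn))
  obtain ⟨B, hB, hsub⟩ := key Set.univ (h 𝒱 hVopen hVcov)
  have hBuniv : B = Set.univ := Set.eq_univ_of_univ_subset (fun g _ => hsub (by simp))
  rwa [hBuniv] at hB
end

section
/- Let X be a Tychonoff space such that for every A ⊆ C(X,ℝ), every f in the pointwise closure of A belongs to partlims(A). Then X is zero-dimensional: the clopen sets form a base for the topology. In particular, the closed interval [0,1] is not a continuous image of any such space. -/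
open MeasureTheory Filter Set ENNReal

/-- Spike functions: continuous, equal to `1` on a given finite set, but with
`{g > 1/2}` of measure at most `1/2`. -/
lemma spike_lemma (F : Finset ℝ) : ∃ g : ℝ → ℝ, Continuous g ∧
    volume {t : ℝ | 1/2 < g t} ≤ 1/2 ∧ ∀ t ∈ F, g t = 1 := by
  rcases F.eq_empty_or_nonempty with rfl | hF
  · exact ⟨fun _ => 0, continuous_const, by norm_num, by simp⟩
  · set r : ℝ := 1 / (4 * (F.card + 1)) with hr
    have hrpos : 0 < r := by positivity
    refine ⟨fun t => 1 - Metric.infDist t ↑F / r,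
      continuous_const.sub ((Metric.continuous_infDist_pt _).div_const r), ?_, ?_⟩
    · have hsub : {t : ℝ | 1/2 < 1 - Metric.infDist t ↑F / r} ⊆
          ⋃ s ∈ F, Metric.ball s (r/2) := by
        intro t ht
        simp only [Set.mem_setOf_eq] at ht
        have h1 : Metric.infDist t ↑F < r/2 := by
          have h2 : Metric.infDist t ↑F / r < 1/2 := by linarith
          have := (div_lt_iff₀ hrpos).1 h2
          linarith
        obtain ⟨s, hs, hds⟩ := (Metric.infDist_lt_iff (by exact_mod_cast hF)).1 h1
        exact Set.mem_biUnion hs (Metric.mem_ball.2 hds)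
      refine (measure_mono hsub).trans ?_
      refine (measure_biUnion_finset_le _ _).trans ?_
      have hvol : ∀ s ∈ F, volume (Metric.ball s (r/2)) = ENNReal.ofReal r := by
        intro s _
        rw [Real.volume_ball]
        ring_nf
      rw [Finset.sum_congr rfl hvol]
      rw [Finset.sum_const, nsmul_eq_mul]
      have hmul : (F.card : ℝ≥0∞) * ENNReal.ofReal r = ENNReal.ofReal (F.card * r) := by
        rw [ENNReal.ofReal_mul (by positivity)]
        norm_num
      rw [hmul]
      have h2 : (F.card : ℝ) * r ≤ 1/2 := by
        have hk : (0:ℝ) ≤ F.card := Nat.cast_nonneg _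
        rw [hr, mul_one_div, div_le_div_iff₀ (by positivity) (by norm_num)]
        nlinarith
      calc ENNReal.ofReal ((F.card : ℝ) * r) ≤ ENNReal.ofReal (1/2) := ENNReal.ofReal_le_ofReal h2
        _ = 1/2 := by rw [ENNReal.ofReal_div_of_pos (by norm_num)]; norm_num
    · intro t ht
      have : Metric.infDist t ↑F = 0 := by
        rw [Metric.infDist_zero_of_mem]
        exact_mod_cast ht
      simp [this]

/-- Key lemma: under the hypothesis on `X`, there is no continuous real function on `X`
whose range contains the open unit interval. -/
lemma no_almost_surj {X : Type*} [TopologicalSpace X]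
    (h : ∀ A : Set (X → ℝ), (∀ g ∈ A, Continuous g) →
      ∀ f : X → ℝ, Continuous f → f ∈ closure A →
        Partlims (toPartial '' A) (toPartial f))
    (f₀ : X → ℝ) (hf₀ : Continuous f₀) (hsurj : Set.Ioo (0:ℝ) 1 ⊆ Set.range f₀) :
    False := by
  set A : Set (X → ℝ) :=
    {φ | ∃ g : ℝ → ℝ, Continuous g ∧ volume {t : ℝ | 1/2 < g t} ≤ 1/2 ∧ φ = g ∘ f₀} with hA
  have hAc : ∀ g ∈ A, Continuous g := by
    rintro φ ⟨g, hg, _, rfl⟩; exact hg.comp hf₀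
  have hcl : (fun _ : X => (1:ℝ)) ∈ closure A := by
    rw [mem_closure_iff_nhds]
    intro s hs
    rw [nhds_pi, Filter.mem_pi] at hs
    obtain ⟨I, hIfin, t, ht, hsub⟩ := hs
    obtain ⟨g, hgc, hgm, hg1⟩ := spike_lemma (hIfin.toFinset.image f₀)
    refine ⟨g ∘ f₀, hsub ?_, ⟨g, hgc, hgm, rfl⟩⟩
    intro i hi
    have h1 : g (f₀ i) = 1 :=
      hg1 _ (Finset.mem_image_of_mem f₀ (hIfin.mem_toFinset.2 hi))
    simpa [h1] using mem_of_mem_nhds (ht i)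
  have hP := h A hAc _ continuous_const hcl
  set E : (X → Option ℝ) → Set ℝ :=
    fun p => {t | ∃ x, f₀ x = t ∧ ∃ y, p x = some y ∧ 1/2 < y} with hE
  have key : ∀ p, Partlims (toPartial '' A) p →
      ∃ S : Set ℝ, MeasurableSet S ∧ E p ⊆ S ∧ volume S ≤ 1/2 := by
    intro p hp
    induction hp with
    | base hf =>
        obtain ⟨φ, ⟨g, hgc, hgm, rfl⟩, rfl⟩ := hf
        refine ⟨{t : ℝ | 1/2 < g t}, ?_, ?_, hgm⟩
        · exact measurableSet_lt measurable_const hgc.measurable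
        · rintro τ ⟨x, rfl, y, hy, hylt⟩
          simp only [toPartial, Function.comp_apply, Option.some.injEq] at hy
          simpa [← hy] using hylt
    | lim f hf ih =>
        choose S hSm hSsub hSle using ih
        have hmono : Monotone (fun N => ⋂ n ∈ {n : ℕ | N ≤ n}, S n) := by
          intro N M hNM
          exact Set.biInter_mono (fun n hn => le_trans hNM hn) (fun n _ => subset_rfl)
        refine ⟨⋃ N, ⋂ n ∈ {n : ℕ | N ≤ n}, S n, ?_, ?_, ?_⟩
        · exact MeasurableSet.iUnion fun N =>
            MeasurableSet.biInter (Set.to_countable _) fun n _ => hSm n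
        · rintro τ ⟨x, rfl, y, hy, hylt⟩
          simp only [partialLim] at hy
          split_ifs at hy with hc
          obtain ⟨hev, hex⟩ := hc
          have hspec := hex.choose_spec
          have hyeq : hex.choose = y := by
            simpa using hy
          rw [hyeq] at hspec
          have h2 : ∀ᶠ n in atTop, 1/2 < (f n x).getD 0 :=
            hspec.eventually (eventually_gt_nhds hylt)
          obtain ⟨N, hN⟩ := eventually_atTop.1 (hev.and h2)
          refine Set.mem_iUnion.2 ⟨N, Set.mem_biInter fun n hn => ?_⟩
          obtain ⟨hns, hngt⟩ := hN n hn
          obtain ⟨y', hy'⟩ := Option.isSome_iff_exists.1 hns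
          refine hSsub n ⟨x, rfl, y', hy', ?_⟩
          simpa [hy'] using hngt
        · rw [Monotone.measure_iUnion hmono]
          refine iSup_le fun N => le_trans (measure_mono ?_) (hSle N)
          exact Set.biInter_subset_of_mem (by simp : N ∈ {n : ℕ | N ≤ n})
  obtain ⟨S, hSm, hsubS, hleS⟩ := key _ hP
  have hIoo : Set.Ioo (0:ℝ) 1 ⊆ S := by
    intro c hc
    obtain ⟨x, hx⟩ := hsurj hc
    exact hsubS ⟨x, hx, 1, rfl, by norm_num⟩
  have : (1 : ℝ≥0∞) ≤ 1/2 := by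
    calc (1:ℝ≥0∞) = volume (Set.Ioo (0:ℝ) 1) := by simp
      _ ≤ volume S := measure_mono hIoo
      _ ≤ 1/2 := hleS
  norm_num at this

theorem stmt14 {X : Type*} [TopologicalSpace X] [T35Space X]
    (h : ∀ A : Set (X → ℝ), (∀ g ∈ A, Continuous g) →
      ∀ f : X → ℝ, Continuous f → f ∈ closure A →
        Partlims (toPartial '' A) (toPartial f)) :
    (∀ x : X, ∀ U : Set X, IsOpen U → x ∈ U →
      ∃ V : Set X, IsClopen V ∧ x ∈ V ∧ V ⊆ U) ∧
    ¬ ∃ φ : X → ↥(Set.Icc (0 : ℝ) 1), Continuous φ ∧ Function.Surjective φ := by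
  constructor
  · intro x U hU hxU
    obtain ⟨f, hfc, hf0, hf1⟩ := CompletelyRegularSpace.completely_regular x Uᶜ
      hU.isClosed_compl (by simpa using hxU)
    set f₀ : X → ℝ := fun z => 1 - (f z : ℝ) with hf₀def
    have hf₀c : Continuous f₀ := continuous_const.sub (continuous_subtype_val.comp hfc)
    by_cases hmiss : ∃ c ∈ Set.Ioo (0:ℝ) 1, c ∉ Set.range f₀
    · obtain ⟨c, ⟨hc0, hc1⟩, hcr⟩ := hmiss
      have hVeq : f₀ ⁻¹' Set.Ioi c = f₀ ⁻¹' Set.Ici c := by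
        ext z
        simp only [Set.mem_preimage, Set.mem_Ioi, Set.mem_Ici]
        constructor
        · exact le_of_lt
        · intro hz
          rcases lt_or_eq_of_le hz with h' | h'
          · exact h'
          · exact absurd ⟨z, h'.symm⟩ hcr
      refine ⟨f₀ ⁻¹' Set.Ioi c, ⟨?_, isOpen_Ioi.preimage hf₀c⟩, ?_, ?_⟩
      · rw [hVeq]; exact isClosed_Ici.preimage hf₀c
      · show f₀ x ∈ Set.Ioi c
        have : (f x : ℝ) = 0 := by rw [hf0]; rfl
        simp only [Set.mem_Ioi, hf₀def, this]
        linarith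
      · intro z hz
        by_contra hzU
        have hz1 : f z = 1 := hf1 hzU
        have : f₀ z = 0 := by
          have : (f z : ℝ) = 1 := by rw [hz1]; rfl
          simp only [hf₀def, this]
          norm_num
        simp only [Set.mem_preimage, Set.mem_Ioi, this] at hz
        linarith
    · exfalso
      push_neg at hmiss
      exact no_almost_surj h f₀ hf₀c fun c hc => hmiss c hc
  · rintro ⟨φ, hφc, hφs⟩
    refine no_almost_surj h (fun z => (φ z : ℝ)) (continuous_subtype_val.comp hφc) ?_
    intro c hc
    obtain ⟨x, hx⟩ := hφs ⟨c, le_of_lt hc.1, le_of_lt hc.2⟩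
    exact ⟨x, by simp [hx]⟩
end

section
/- In C([0,1],ℝ) with the topology of pointwise convergence, let A be the set of continuous functions f : [0,1] → [0,1] such that the Lebesgue measure of f⁻¹((1/2,1]) is at most 1/2. Then the constant function 1 is in the closure of A, but 1 is not in the closure of A under partial limits of sequences. -/
open MeasureTheory Metric Set

lemma exists_bump (t : Finset (Set.Icc (0 : ℝ) 1)) :
    ∃ g : ↥(Set.Icc (0 : ℝ) 1) → ℝ, Continuous g ∧ (∀ x, g x ∈ Set.Icc (0 : ℝ) 1) ∧
      MeasureTheory.volume (g ⁻¹' Set.Ioc (1 / 2 : ℝ) 1) ≤ 1 / 2 ∧ ∀ x ∈ t, g x = 1 := by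
  rcases t.eq_empty_or_nonempty with rfl | ht
  · refine ⟨fun _ => 0, continuous_const, fun x => ⟨le_refl _, zero_le_one⟩, ?_, by simp⟩
    have : ((fun _ : ↥(Set.Icc (0:ℝ) 1) => (0:ℝ)) ⁻¹' Set.Ioc (1/2 : ℝ) 1) = ∅ := by
      ext x; simp only [Set.mem_preimage, Set.mem_Ioc, Set.mem_empty_iff_false, iff_false,
        not_and]; intro h; norm_num at h
    simp [this]
  · set r : ℝ := (4 * ((t.card : ℝ) + 1))⁻¹ with hr
    have hcard : (0:ℝ) < (t.card : ℝ) + 1 := by positivity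
    have hrpos : 0 < r := by positivity
    set g : ↥(Set.Icc (0:ℝ) 1) → ℝ := fun x => max 0 (1 - infDist x (↑t : Set _) / r) with hg
    have hcont : Continuous g :=
      continuous_const.max (continuous_const.sub ((continuous_infDist_pt _).div_const r))
    refine ⟨g, hcont, ?_, ?_, ?_⟩
    · intro x
      refine ⟨le_max_left _ _, max_le zero_le_one ?_⟩
      have h1 : 0 ≤ infDist x (↑t : Set _) / r := div_nonneg infDist_nonneg hrpos.le
      linarith
    · -- measure bound
      have hsub : g ⁻¹' Set.Ioc (1/2 : ℝ) 1 ⊆ ⋃ y ∈ t, Metric.ball y (r/2) := by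
        intro x hx
        have hx1 : 1/2 < g x := hx.1
        have h2 : 1/2 < 1 - infDist x (↑t : Set _) / r := by
          rcases max_cases (0:ℝ) (1 - infDist x (↑t : Set _) / r) with ⟨he, _⟩ | ⟨he, _⟩
          · rw [hg] at hx1; simp only [he] at hx1; norm_num at hx1
          · rw [hg] at hx1; simpa [he] using hx1
        have h3 : infDist x (↑t : Set _) < r/2 := by
          have : infDist x (↑t : Set _) / r < 1/2 := by linarith
          calc infDist x (↑t : Set _) = infDist x (↑t : Set _) / r * r := by
                field_simp
            _ < 1/2 * r := by exact mul_lt_mul_of_pos_right this hrpos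
            _ = r/2 := by ring
        rcases (Metric.infDist_lt_iff (Finset.coe_nonempty.2 ht)).mp h3 with ⟨y, hy, hdy⟩
        exact Set.mem_biUnion hy (mem_ball.mpr (by rw [dist_comm]; rwa [dist_comm] at hdy))
      calc MeasureTheory.volume (g ⁻¹' Set.Ioc (1/2 : ℝ) 1)
          ≤ MeasureTheory.volume (⋃ y ∈ t, Metric.ball y (r/2)) := measure_mono hsub
        _ ≤ ∑ y ∈ t, MeasureTheory.volume (Metric.ball y (r/2)) := measure_biUnion_finset_le t _
        _ ≤ ∑ y ∈ t, ENNReal.ofReal r := by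
            refine Finset.sum_le_sum fun y _ => ?_
            have hemb : MeasurableEmbedding ((↑) : ↥(Set.Icc (0:ℝ) 1) → ℝ) :=
              MeasurableEmbedding.subtype_coe measurableSet_Icc
            have : MeasureTheory.volume (Metric.ball y (r/2))
                = MeasureTheory.volume (((↑) : ↥(Set.Icc (0:ℝ) 1) → ℝ) '' Metric.ball y (r/2)) := by
              rw [unitInterval.volume_def, hemb.comap_apply]
            rw [this]
            have himg : ((↑) : ↥(Set.Icc (0:ℝ) 1) → ℝ) '' Metric.ball y (r/2)
                ⊆ Metric.ball (y : ℝ) (r/2) := by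
              rintro _ ⟨z, hz, rfl⟩
              exact hz
            calc MeasureTheory.volume (((↑) : ↥(Set.Icc (0:ℝ) 1) → ℝ) '' Metric.ball y (r/2))
                ≤ MeasureTheory.volume (Metric.ball (y:ℝ) (r/2)) := measure_mono himg
              _ = ENNReal.ofReal (2 * (r/2)) := Real.volume_ball _ _
              _ = ENNReal.ofReal r := by ring_nf
        _ = t.card * ENNReal.ofReal r := by rw [Finset.sum_const, nsmul_eq_mul]
        _ ≤ 1/2 := by
            rw [← ENNReal.ofReal_natCast, ← ENNReal.ofReal_mul (by positivity)]
            have : (t.card : ℝ) * r ≤ 1/2 := by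
              rw [hr]
              rw [mul_inv_le_iff₀ (by positivity)]
              nlinarith [Nat.cast_nonneg (α := ℝ) t.card]
            calc ENNReal.ofReal ((t.card : ℝ) * r) ≤ ENNReal.ofReal (1/2) :=
                  ENNReal.ofReal_le_ofReal this
              _ = 1/2 := by rw [ENNReal.ofReal_div_of_pos] <;> norm_num
    · intro x hx
      have : infDist x (↑t : Set _) = 0 := infDist_zero_of_mem (Finset.mem_coe.mpr hx)
      simp [hg, this, hrpos.ne']

lemma partlims_invariant {A : Set (↥(Set.Icc (0:ℝ) 1) → ℝ)}
    (hA : ∀ f ∈ A, (∀ x, f x ∈ Set.Icc (0:ℝ) 1) ∧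
      volume (f ⁻¹' Set.Ioc (1/2 : ℝ) 1) ≤ 1/2)
    {g : ↥(Set.Icc (0:ℝ) 1) → Option ℝ} (hg : Partlims (toPartial '' A) g) :
    volume {x | 1/2 < (g x).getD 0} ≤ 1/2 := by
  induction hg with
  | @base f hf =>
    rcases hf with ⟨f₀, hf₀, rfl⟩
    have h1 : {x | 1/2 < (toPartial f₀ x).getD 0} = f₀ ⁻¹' Set.Ioc (1/2 : ℝ) 1 := by
      ext x
      simp only [toPartial, Option.getD_some, mem_setOf_eq, mem_preimage, mem_Ioc]
      exact ⟨fun h => ⟨h, ((hA f₀ hf₀).1 x).2⟩, fun h => h.1⟩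
    rw [h1]; exact (hA f₀ hf₀).2
  | lim f hf ih =>
    set T : ℕ → Set ↥(Set.Icc (0:ℝ) 1) := fun N => ⋂ n ∈ Set.Ici N, {x | 1/2 < (f n x).getD 0}
      with hT
    have hmono : Monotone T := by
      intro a b hab
      exact Set.biInter_subset_biInter_left (fun n hn => le_trans hab hn)
    have hsub : {x | 1/2 < (partialLim f x).getD 0} ⊆ ⋃ N, T N := by
      intro x hx
      simp only [mem_setOf_eq, partialLim] at hx
      split_ifs at hx with h
      · have hy := h.2.choose_spec
        simp only [Option.getD_some] at hx
        have hev : ∀ᶠ n in Filter.atTop, 1/2 < (f n x).getD 0 :=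
          hy.eventually (eventually_gt_nhds hx)
        rcases Filter.eventually_atTop.mp hev with ⟨N, hN⟩
        exact Set.mem_iUnion.mpr ⟨N, Set.mem_biInter fun n hn => hN n hn⟩
      · simp at hx; norm_num at hx
    calc volume {x | 1/2 < (partialLim f x).getD 0} ≤ volume (⋃ N, T N) := measure_mono hsub
      _ = ⨆ N, volume (T N) := hmono.measure_iUnion
      _ ≤ 1/2 := by
          refine iSup_le fun N => ?_
          calc volume (T N) ≤ volume {x | 1/2 < (f N x).getD 0} :=
                measure_mono (Set.biInter_subset_of_mem (Set.mem_Ici.mpr le_rfl))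
            _ ≤ 1/2 := ih N

theorem stmt15 :
    letI A : Set (↥(Set.Icc (0 : ℝ) 1) → ℝ) :=
      {f | Continuous f ∧ (∀ x, f x ∈ Set.Icc (0 : ℝ) 1) ∧
        MeasureTheory.volume (f ⁻¹' Set.Ioc (1 / 2 : ℝ) 1) ≤ 1 / 2}
    (fun _ => (1 : ℝ)) ∈ closure A ∧
      ¬ Partlims (toPartial '' A) (toPartial fun _ => (1 : ℝ)) := by
  constructor
  · rw [_root_.mem_closure_iff]
    intro o ho hmem
    rcases isOpen_pi_iff.mp ho _ hmem with ⟨I, u, hu, hpi⟩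
    rcases exists_bump I with ⟨g, hgc, hgr, hgm, hgI⟩
    refine ⟨g, hpi fun i hi => ?_, hgc, hgr, hgm⟩
    rw [hgI i hi]
    exact (hu i hi).2
  · intro hP
    have hinv := partlims_invariant (fun f hf => ⟨hf.2.1, hf.2.2⟩) hP
    have h1 : {x : ↥(Set.Icc (0:ℝ) 1) | 1/2 < ((toPartial fun _ => (1:ℝ)) x).getD 0}
        = Set.univ := by
      ext x
      simp only [toPartial, Option.getD_some, mem_setOf_eq, mem_univ, iff_true]
      norm_num
    rw [h1] at hinv
    have : (volume : Measure ↥(Set.Icc (0:ℝ) 1)) Set.univ = 1 := measure_univ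
    rw [this] at hinv
    have : ¬ ((1 : ENNReal) ≤ 1/2) := by
      simp only [not_le]
      exact ENNReal.half_lt_self one_ne_zero ENNReal.one_ne_top
    exact this hinv
end

section
/- For every topological space X and every open cover 𝒰 of X (with X ∉ 𝒰), if X ∈ LI(𝒰) then 𝒰 is an ω-cover of X. That is, Γ(X) ⊆ L(X) ⊆ Ω(X). -/
lemma LI_omega {X : Type*} {𝒰 : Set (Set X)} {A : Set X} (h : LI 𝒰 A) :
    ∀ F : Set X, F.Finite → F ⊆ A → ∃ U ∈ 𝒰, F ⊆ U := by
  induction h with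
  | base hU => exact fun F _ hFA => ⟨_, hU, hFA⟩
  | lim B hB ih =>
    intro F hF hFA
    classical
    have hm : ∀ x ∈ F, ∃ m, ∀ n, m ≤ n → x ∈ B n := fun x hx =>
      mem_setLiminf.mp (hFA hx)
    set g : X → ℕ := fun x => if h : ∃ m, ∀ n, m ≤ n → x ∈ B n then h.choose else 0
    set M : ℕ := hF.toFinset.sup g with hM
    have hFB : F ⊆ B M := by
      intro x hx
      have hex := hm x hx
      have hg : g x = hex.choose := dif_pos hex
      have hle : g x ≤ M := Finset.le_sup (hF.mem_toFinset.mpr hx)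
      exact hex.choose_spec M (hg ▸ hle)
    exact ih M F hF hFB

theorem stmt16 {X : Type*} [TopologicalSpace X] (𝒰 : Set (Set X))
    (hopen : ∀ U ∈ 𝒰, IsOpen U) (hproper : ∀ U ∈ 𝒰, U ≠ Set.univ)
    (hcover : ⋃₀ 𝒰 = Set.univ) :
    (𝒰.Infinite → (∀ x : X, {U ∈ 𝒰 | x ∉ U}.Finite) → LI 𝒰 Set.univ) ∧
    (LI 𝒰 Set.univ → ∀ F : Set X, F.Finite → ∃ U ∈ 𝒰, F ⊆ U) := by
  constructor
  · intro hinf hfin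
    let e := Set.Infinite.natEmbedding 𝒰 hinf
    let B : ℕ → Set X := fun n => (e n : Set X)
    have hBmem : ∀ n, B n ∈ 𝒰 := fun n => (e n).2
    have hinj : Function.Injective B := fun a b h =>
      e.injective (Subtype.ext h)
    have huniv : SetLiminf B = Set.univ := by
      ext x
      simp only [Set.mem_univ, iff_true]
      rw [mem_setLiminf]
      have hT : {n : ℕ | x ∉ B n}.Finite := by
        have : {n : ℕ | x ∉ B n} ⊆ B ⁻¹' {U ∈ 𝒰 | x ∉ U} := by
          intro n hn
          exact ⟨hBmem n, hn⟩
        exact Set.Finite.subset ((hfin x).preimage hinj.injOn) this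
      obtain ⟨M, hMb⟩ := hT.bddAbove
      refine ⟨M + 1, fun n hn => ?_⟩
      by_contra hx
      exact absurd (hMb hx) (by omega)
    have := LI.lim B (fun n => LI.base (hBmem n))
    rwa [huniv] at this
  · intro h F hF
    exact LI_omega h F hF (Set.subset_univ F)
end

section
/- Let X be a topological space satisfying ⟨L→Γ⟩: for every open cover 𝒰 of X with X ∈ LI(𝒰), there exist U_1, U_2, … ∈ 𝒰 with X = liminf_n U_n. Then X satisfies S₁(Γ,Γ): for all open γ-covers 𝒰_1, 𝒰_2, … of X there are U_n ∈ 𝒰_n with X = liminf_n U_n. -/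
/-- A γ-cover: an infinite family of proper subsets such that every point belongs to
all but finitely many members. -/
def IsGammaCover {X : Type*} (𝒰 : Set (Set X)) : Prop :=
  𝒰.Infinite ∧ (∀ U ∈ 𝒰, U ≠ Set.univ) ∧ ∀ x : X, {U ∈ 𝒰 | x ∉ U}.Finite

theorem stmt17 {X : Type*} [TopologicalSpace X]
    (h : ∀ 𝒰 : Set (Set X), (∀ U ∈ 𝒰, IsOpen U) → (∀ U ∈ 𝒰, U ≠ Set.univ) →
      ⋃₀ 𝒰 = Set.univ → LI 𝒰 Set.univ →
      ∃ U : ℕ → Set X, (∀ n, U n ∈ 𝒰) ∧ SetLiminf U = Set.univ) :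
    ∀ 𝒰 : ℕ → Set (Set X),
      (∀ n, (∀ U ∈ 𝒰 n, IsOpen U) ∧ IsGammaCover (𝒰 n)) →
      ∃ U : ℕ → Set X, (∀ n, U n ∈ 𝒰 n) ∧ SetLiminf U = Set.univ := by
  intro 𝒰 h𝒰
  have hinf : ∀ n, (𝒰 n).Infinite := fun n => (h𝒰 n).2.1
  -- injective enumeration of each cover
  let e : ∀ n, ℕ ↪ (𝒰 n) := fun n => (hinf n).natEmbedding
  let U : ℕ → ℕ → Set X := fun n k => ((e n) k : Set X)
  have hUmem : ∀ n k, U n k ∈ 𝒰 n := fun n k => ((e n) k).2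
  have hUinj : ∀ n, Function.Injective (U n) := by
    intro n a b hab
    exact (e n).injective (Subtype.coe_injective hab)
  have hUopen : ∀ n k, IsOpen (U n k) := fun n k => (h𝒰 n).1 _ (hUmem n k)
  have hUproper : ∀ n k, U n k ≠ Set.univ := fun n k => (h𝒰 n).2.2.1 _ (hUmem n k)
  -- each point is in all but finitely many U n k (k varying)
  have hbad : ∀ n x, {k | x ∉ U n k}.Finite := by
    intro n x
    have hfin : {V ∈ 𝒰 n | x ∉ V}.Finite := (h𝒰 n).2.2.2 x
    have hsub : {k | x ∉ U n k} ⊆ (U n) ⁻¹' {V ∈ 𝒰 n | x ∉ V} :=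
      fun k hk => ⟨hUmem n k, hk⟩
    exact (hfin.preimage (hUinj n).injOn).subset hsub
  have hgood : ∀ n x, ∃ K, ∀ k, K ≤ k → x ∈ U n k := by
    intro n x
    obtain ⟨K, hK⟩ := (hbad n x).bddAbove
    refine ⟨K + 1, fun k hk => ?_⟩
    by_contra hx
    have := hK hx
    omega
  -- finite diagonal intersections
  let A : ℕ → ℕ → Set X := fun m k => ⋂ i ∈ Finset.range (m + 1), U i k
  have hAsub : ∀ m k i, i ≤ m → A m k ⊆ U i k := fun m k i hi =>
    Set.biInter_subset_of_mem (Finset.mem_range.2 (by omega))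
  have hAgood : ∀ m x, ∃ K, ∀ k, K ≤ k → x ∈ A m k := by
    intro m x
    have hi : ∀ i : ℕ, ∃ K, ∀ k, K ≤ k → x ∈ U i k := fun i => hgood i x
    choose Kf hKf using hi
    refine ⟨(Finset.range (m + 1)).sup Kf, fun k hk => ?_⟩
    apply Set.mem_biInter
    intro i hmem
    exact hKf i k (le_trans (Finset.le_sup hmem) hk)
  have hAopen : ∀ m k, IsOpen (A m k) :=
    fun m k => isOpen_biInter_finset (fun i _ => hUopen i k)
  -- the auxiliary cover
  let 𝒱 : Set (Set X) := {S | ∃ m k, S = A m k ∩ U 0 m}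
  have hopen : ∀ S ∈ 𝒱, IsOpen S := by
    rintro S ⟨m, k, rfl⟩
    exact (hAopen m k).inter (hUopen 0 m)
  have hproper : ∀ S ∈ 𝒱, S ≠ Set.univ := by
    rintro S ⟨m, k, rfl⟩ heq
    have h1 : Set.univ ⊆ U 0 m := by
      rw [← heq]; exact Set.inter_subset_right
    exact hUproper 0 m (Set.univ_subset_iff.1 h1)
  have hcover : ⋃₀ 𝒱 = Set.univ := by
    apply Set.eq_univ_iff_forall.2
    intro x
    obtain ⟨K0, hK0⟩ := hgood 0 x
    obtain ⟨K, hK⟩ := hAgood K0 x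
    exact Set.mem_sUnion.2 ⟨A K0 K ∩ U 0 K0, ⟨K0, K, rfl⟩, hK K le_rfl, hK0 K0 le_rfl⟩
  have hLI : LI 𝒱 Set.univ := by
    have hbase : LI 𝒱 (SetLiminf fun m => SetLiminf fun k => A m k ∩ U 0 m) := by
      apply LI.lim
      intro m
      apply LI.lim
      intro k
      exact LI.base ⟨m, k, rfl⟩
    have hkey : (SetLiminf fun m => SetLiminf fun k => A m k ∩ U 0 m) = Set.univ := by
      apply Set.eq_univ_iff_forall.2
      intro x
      apply mem_setLiminf.2
      obtain ⟨m₀, hm₀⟩ := hgood 0 x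
      refine ⟨m₀, fun m hm => ?_⟩
      apply mem_setLiminf.2
      obtain ⟨K, hK⟩ := hAgood m x
      exact ⟨K, fun k hk => ⟨hK k hk, hm₀ m hm⟩⟩
    rwa [hkey] at hbase
  obtain ⟨V, hVmem, hVlim⟩ := h 𝒱 hopen hproper hcover hLI
  choose mf kf hVeq using hVmem
  have hVtail : ∀ x : X, ∃ M, ∀ j, M ≤ j → x ∈ V j := by
    intro x
    exact mem_setLiminf.1 (Set.eq_univ_iff_forall.1 hVlim x)
  -- the levels mf j are unbounded on every tail
  have hclaim : ∀ n J : ℕ, ∃ j, J ≤ j ∧ n ≤ mf j := by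
    intro n J
    by_contra hcon
    push_neg at hcon
    have hsub : Set.Ici J ⊆ ⋃ m ∈ Finset.range n, {j | J ≤ j ∧ mf j = m} := by
      intro j hj
      simp only [Set.mem_iUnion, Set.mem_setOf_eq]
      exact ⟨mf j, Finset.mem_range.2 (hcon j hj), hj, rfl⟩
    have hfib : ∃ m ∈ Finset.range n, {j | J ≤ j ∧ mf j = m}.Infinite := by
      by_contra hfin
      push_neg at hfin
      have hfinU : (⋃ m ∈ Finset.range n, {j | J ≤ j ∧ mf j = m}).Finite :=
        Set.Finite.biUnion (Finset.range n).finite_toSet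
          (fun m hm => hfin m hm)
      exact Set.Ici_infinite J (hfinU.subset hsub)
    obtain ⟨m', _, hm'inf⟩ := hfib
    apply hUproper 0 m'
    apply Set.eq_univ_iff_forall.2
    intro x
    obtain ⟨M, hM⟩ := hVtail x
    obtain ⟨j, hjmem, hjgt⟩ := hm'inf.exists_gt M
    have hx : x ∈ V j := hM j (le_of_lt hjgt)
    rw [hVeq j] at hx
    exact hjmem.2 ▸ hx.2
  choose G hG1 hG2 using hclaim
  let jf : ℕ → ℕ := fun n => Nat.rec (G 0 0) (fun n ih => G (n + 1) (ih + 1)) n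
  have hjfS : ∀ n, jf (n + 1) = G (n + 1) (jf n + 1) := fun n => rfl
  have hjf_mf : ∀ n, n ≤ mf (jf n) := by
    intro n
    cases n with
    | zero => exact hG2 0 0
    | succ n => exact hG2 (n + 1) (jf n + 1)
  have hjf_ge : ∀ n, n ≤ jf n := by
    intro n
    induction n with
    | zero => exact Nat.zero_le _
    | succ n ih =>
      have h1 : jf n + 1 ≤ jf (n + 1) := by
        rw [hjfS n]; exact hG1 (n + 1) (jf n + 1)
      omega
  refine ⟨fun n => U n (kf (jf n)), fun n => hUmem _ _, ?_⟩
  apply Set.eq_univ_iff_forall.2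
  intro x
  apply mem_setLiminf.2
  obtain ⟨M, hM⟩ := hVtail x
  refine ⟨M, fun n hn => ?_⟩
  have hx : x ∈ V (jf n) := hM (jf n) (le_trans hn (hjf_ge n))
  rw [hVeq (jf n)] at hx
  exact hAsub (mf (jf n)) (kf (jf n)) n (hjf_mf n) hx.1
end

section
/- Assume Jordan's fusion lemma: if B = ⋃_n B_n is an increasing union where each B_n satisfies S₁(Γ,Γ), and U^n_m are open sets with B_n ⊆ liminf_m U^n_m for each n, then there exist m_1, m_2, … with B ⊆ liminf_n U^n_{m_n}. Then the property ⟨L→Γ⟩ is preserved by countable increasing unions: if X_1 ⊆ X_2 ⊆ … all satisfy ⟨L→Γ⟩ and each satisfies S₁(Γ,Γ), then X = ⋃_n X_n satisfies ⟨L→Γ⟩. -/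
/-- The selection property S₁(Γ,Γ) of a topological space: from every sequence of open
γ-covers one can select one member from each so that the selections form a γ-cover. -/
def S1GammaGamma (X : Type*) [TopologicalSpace X] : Prop :=
  ∀ 𝒰 : ℕ → Set (Set X), (∀ n, (∀ U ∈ 𝒰 n, IsOpen U) ∧ IsGammaCover (𝒰 n)) →
    ∃ U : ℕ → Set X, (∀ n, U n ∈ 𝒰 n) ∧ SetLiminf U = Set.univ

/-- The property ⟨L→Γ⟩ of a topological space: every open cover 𝒰 with X ∈ LI(𝒰)
contains a sequence whose liminf is the whole space. -/
def LtoGamma (X : Type*) [TopologicalSpace X] : Prop :=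
  ∀ 𝒰 : Set (Set X), (∀ U ∈ 𝒰, IsOpen U) → (∀ U ∈ 𝒰, U ≠ Set.univ) →
    ⋃₀ 𝒰 = Set.univ → LI 𝒰 Set.univ →
    ∃ U : ℕ → Set X, (∀ n, U n ∈ 𝒰) ∧ SetLiminf U = Set.univ

lemma setLiminf_preimage {X Y : Type*} (f : Y → X) (B : ℕ → Set X) :
    f ⁻¹' SetLiminf B = SetLiminf (fun n => f ⁻¹' B n) := by
  simp [SetLiminf, Set.preimage_iUnion, Set.preimage_iInter]

lemma LI_preimage {X Y : Type*} (f : Y → X) {𝒰 : Set (Set X)} {A : Set X}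
    (h : LI 𝒰 A) : LI ((fun U => f ⁻¹' U) '' 𝒰) (f ⁻¹' A) := by
  induction h with
  | base hU => exact LI.base ⟨_, hU, rfl⟩
  | lim B hB ih =>
      rw [setLiminf_preimage]
      exact LI.lim _ ih

theorem stmt18 {X : Type*} [TopologicalSpace X]
    (jordan : ∀ B : ℕ → Set X, (∀ n, B n ⊆ B (n + 1)) →
      (∀ n, S1GammaGamma (B n)) →
      ∀ U : ℕ → ℕ → Set X, (∀ n m, IsOpen (U n m)) →
        (∀ n, B n ⊆ SetLiminf (U n)) →
        ∃ m : ℕ → ℕ, (⋃ n, B n) ⊆ SetLiminf (fun n => U n (m n)))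
    (Xs : ℕ → Set X) (hmono : ∀ n, Xs n ⊆ Xs (n + 1))
    (hLG : ∀ n, LtoGamma (Xs n)) (hS1 : ∀ n, S1GammaGamma (Xs n))
    (hunion : (⋃ n, Xs n) = Set.univ) :
    LtoGamma X := by
  intro 𝒰 hopen hproper hcover hLI
  have key : ∀ n, ∃ U : ℕ → Set X, (∀ m, U m ∈ 𝒰) ∧ Xs n ⊆ SetLiminf U := by
    intro n
    by_cases hc : ∃ U ∈ 𝒰, Xs n ⊆ U
    · obtain ⟨U, hU, hsub⟩ := hc
      refine ⟨fun _ => U, fun _ => hU, fun x hx => ?_⟩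
      simp only [SetLiminf, Set.mem_iUnion, Set.mem_iInter]
      exact ⟨0, fun _ _ => hsub hx⟩
    · push_neg at hc
      set 𝒰' : Set (Set (Xs n)) := (fun U => (Subtype.val : Xs n → X) ⁻¹' U) '' 𝒰 with h𝒰'
      have hres := hLG n 𝒰' ?_ ?_ ?_ ?_
      · obtain ⟨W, hW, hWlim⟩ := hres
        have hchoice : ∀ m, ∃ V ∈ 𝒰, (Subtype.val : Xs n → X) ⁻¹' V = W m := fun m => hW m
        choose V hV hVeq using hchoice
        refine ⟨V, hV, fun x hx => ?_⟩
        have hx' : (⟨x, hx⟩ : Xs n) ∈ SetLiminf W := hWlim ▸ Set.mem_univ _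
        have heqW : SetLiminf W = (Subtype.val : Xs n → X) ⁻¹' SetLiminf V := by
          rw [setLiminf_preimage]
          exact congrArg SetLiminf (funext fun m => (hVeq m).symm)
        rw [heqW] at hx'
        exact hx'
      · rintro _ ⟨U, hU, rfl⟩
        exact (hopen U hU).preimage continuous_subtype_val
      · rintro _ ⟨U, hU, rfl⟩ heq
        refine hc U hU fun x hx => ?_
        have h2 : (Subtype.val : Xs n → X) ⁻¹' U = Set.univ := heq
        have : (⟨x, hx⟩ : Xs n) ∈ (Subtype.val : Xs n → X) ⁻¹' U := by
          rw [h2]; trivial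
        exact this
      · ext ⟨x, hx⟩
        simp only [Set.mem_sUnion, Set.mem_univ, iff_true]
        have : x ∈ ⋃₀ 𝒰 := hcover ▸ Set.mem_univ x
        obtain ⟨U, hU, hxU⟩ := this
        exact ⟨_, ⟨U, hU, rfl⟩, hxU⟩
      · have := LI_preimage (Subtype.val : Xs n → X) hLI
        simpa using this
  choose U hU hUsub using key
  obtain ⟨m, hm⟩ := jordan Xs hmono hS1 U (fun n m => hopen _ (hU n m)) hUsub
  rw [hunion] at hm
  exact ⟨fun n => U n (m n), fun n => hU n (m n), Set.eq_univ_of_univ_subset hm⟩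
end
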